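/- arXiv:1808.01902 — 2 statements merged into one kernel-verified Lean document; each statement's English description precedes it below -/
import Mathlib

section
/- For every real x with |x| < 1, 1/M(1+x, 1−x) = Σ_{k=0}^∞ ( (2k choose k) / 4^k )² · x^{2k}, where M denotes the arithmetic–geometric mean. (The coefficient ((2k choose k)/4^k)² equals ((1·3·5···(2k−1))/(2·4·6···(2k)))².) -/
open Filter Topology Finset MeasureTheory Set

/-- The pair of sequences defined by iterating the arithmetic mean and the geometric mean. -/
noncomputable def agmSeq (a b : ℝ) : ℕ → ℝ × ℝ
  | 0 => (a, b)
  | n + 1 => (((agmSeq a b n).1 + (agmSeq a b n).2) / 2,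
      Real.sqrt ((agmSeq a b n).1 * (agmSeq a b n).2))

/-- The arithmetic–geometric mean of `a` and `b`: the common limit of the two sequences. -/
noncomputable def agm (a b : ℝ) : ℝ :=
  limUnder atTop (fun n => (agmSeq a b n).1)

noncomputable def cc (k : ℕ) : ℝ := ((2 * k).choose k : ℝ) / 4 ^ k

noncomputable def KK (a b : ℝ) : ℝ := ∫ t : ℝ, (Real.sqrt ((t^2 + a^2) * (t^2 + b^2)))⁻¹

noncomputable def II (k : ℕ) : ℝ := ∫ t : ℝ, (((t:ℝ)^2 + 1) ^ (k+1))⁻¹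

lemma cc_nonneg (k : ℕ) : 0 ≤ cc k := by
  unfold cc; positivity

lemma cc_zero : cc 0 = 1 := by simp [cc]

lemma cc_succ (k : ℕ) : cc (k + 1) = cc k * ((2 * k + 1) / (2 * k + 2)) := by
  have h := Nat.succ_mul_centralBinom_succ k
  have h' : ((k:ℝ) + 1) * ((2 * (k+1)).choose (k+1) : ℝ) =
      2 * (2 * k + 1) * ((2*k).choose k : ℝ) := by
    have := congrArg (Nat.cast : ℕ → ℝ) h
    push_cast [Nat.centralBinom] at this
    push_cast
    linarith [this]
  unfold cc
  have hk1 : ((k:ℝ) + 1) ≠ 0 := by positivity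
  field_simp
  rw [pow_succ]
  linear_combination (2 * (4:ℝ)^k) * h'

lemma cc_le_one (k : ℕ) : cc k ≤ 1 := by
  induction k with
  | zero => simp [cc_zero]
  | succ n ih =>
    rw [cc_succ]
    have h1 : (2 * (n:ℝ) + 1) / (2 * n + 2) ≤ 1 := by
      rw [div_le_one (by positivity)]; linarith
    calc cc n * ((2 * n + 1) / (2 * n + 2)) ≤ 1 * 1 :=
      mul_le_mul ih h1 (by positivity) one_pos.le
    _ = 1 := by ring

lemma cc_mul_succ (k : ℕ) : ((k:ℝ) + 1) * cc (k + 1) = ((k:ℝ) + 1/2) * cc k := by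
  rw [cc_succ]
  have : (2 * (k:ℝ) + 2) ≠ 0 := by positivity
  field_simp

-- reflection: 2 * T m = m * u m
lemma cc_reflect (m : ℕ) :
    2 * ∑ k ∈ range (m+1), (k:ℝ) * (cc k * cc (m - k)) =
      m * ∑ k ∈ range (m+1), cc k * cc (m - k) := by
  have hrefl : ∑ k ∈ range (m+1), (k:ℝ) * (cc k * cc (m - k)) =
      ∑ k ∈ range (m+1), ((m - k : ℕ) : ℝ) * (cc (m - k) * cc k) := by
    rw [← Finset.sum_range_reflect (fun k => (k:ℝ) * (cc k * cc (m - k))) (m+1)]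
    refine Finset.sum_congr rfl fun j hj => ?_
    rw [Finset.mem_range] at hj
    have hj' : j ≤ m := Nat.lt_succ_iff.mp hj
    have : m + 1 - 1 - j = m - j := by omega
    rw [this]
    have : m - (m - j) = j := by omega
    rw [this]
  rw [two_mul]
  nth_rewrite 2 [hrefl]
  rw [← Finset.sum_add_distrib, Finset.mul_sum]
  refine Finset.sum_congr rfl fun k hk => ?_
  rw [Finset.mem_range] at hk
  have hk' : k ≤ m := Nat.lt_succ_iff.mp hk
  have : ((m - k : ℕ) : ℝ) = (m : ℝ) - k := by
    rw [Nat.cast_sub hk']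
  rw [this]
  ring

lemma cc_conv (n : ℕ) : ∑ k ∈ range (n+1), cc k * cc (n - k) = 1 := by
  induction n with
  | zero => simp [cc_zero]
  | succ n ih =>
    have key : ((n:ℝ) + 1) * ∑ k ∈ range (n+2), cc k * cc (n + 1 - k) =
        ((n:ℝ) + 1) * ∑ k ∈ range (n+1), cc k * cc (n - k) := by
      have h1 : ((n:ℝ) + 1) * ∑ k ∈ range (n+2), cc k * cc (n + 1 - k) =
          2 * ∑ k ∈ range (n+2), (k:ℝ) * (cc k * cc (n + 1 - k)) := by
        rw [cc_reflect (n+1)]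
        push_cast
        ring
      have h2 : ∑ k ∈ range (n+2), (k:ℝ) * (cc k * cc (n + 1 - k)) =
          ∑ j ∈ range (n+1), ((j:ℝ)+1) * (cc (j+1) * cc (n - j)) := by
        rw [Finset.sum_range_succ' (fun k => (k:ℝ) * (cc k * cc (n + 1 - k))) (n+1)]
        simp only [Nat.cast_zero, zero_mul, add_zero]
        refine Finset.sum_congr rfl fun j hj => ?_
        have : n + 1 - (j + 1) = n - j := by omega
        rw [this]
        push_cast
        ring
      have h3 : ∑ j ∈ range (n+1), ((j:ℝ)+1) * (cc (j+1) * cc (n - j)) =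
          ∑ j ∈ range (n+1), ((j:ℝ) + 1/2) * (cc j * cc (n - j)) := by
        refine Finset.sum_congr rfl fun j _ => ?_
        have := cc_mul_succ j
        nlinarith [this, cc_nonneg (n - j)]
      have h4 : (2:ℝ) * ∑ j ∈ range (n+1), ((j:ℝ) + 1/2) * (cc j * cc (n - j)) =
          2 * ∑ j ∈ range (n+1), (j:ℝ) * (cc j * cc (n - j)) +
            ∑ j ∈ range (n+1), cc j * cc (n - j) := by
        rw [Finset.mul_sum, Finset.mul_sum, ← Finset.sum_add_distrib]
        exact Finset.sum_congr rfl fun j _ => by ring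
      calc ((n:ℝ) + 1) * ∑ k ∈ range (n+2), cc k * cc (n + 1 - k)
          = 2 * ∑ j ∈ range (n+1), ((j:ℝ) + 1/2) * (cc j * cc (n - j)) := by
            rw [h1, h2, h3]
        _ = 2 * ∑ j ∈ range (n+1), (j:ℝ) * (cc j * cc (n - j)) +
            ∑ j ∈ range (n+1), cc j * cc (n - j) := h4
        _ = (n:ℝ) * ∑ j ∈ range (n+1), cc j * cc (n - j) +
            ∑ j ∈ range (n+1), cc j * cc (n - j) := by rw [cc_reflect n]
        _ = ((n:ℝ) + 1) * ∑ k ∈ range (n+1), cc k * cc (n - k) := by ring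
    have hne : ((n:ℝ) + 1) ≠ 0 := by positivity
    have h5 := mul_left_cancel₀ hne key
    rw [h5, ih]

lemma summable_cc {y : ℝ} (hy0 : 0 ≤ y) (hy1 : y < 1) :
    Summable (fun k => cc k * y ^ k) := by
  refine Summable.of_nonneg_of_le (fun k => mul_nonneg (cc_nonneg k) (pow_nonneg hy0 k))
    (fun k => ?_) (summable_geometric_of_lt_one hy0 hy1)
  calc cc k * y ^ k ≤ 1 * y ^ k := by
        exact mul_le_mul_of_nonneg_right (cc_le_one k) (by positivity)
    _ = y ^ k := one_mul _

lemma hasSum_cc {y : ℝ} (hy0 : 0 ≤ y) (hy1 : y < 1) :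
    HasSum (fun k => cc k * y ^ k) ((Real.sqrt (1 - y))⁻¹) := by
  have hs := summable_cc hy0 hy1
  set f := ∑' k, cc k * y ^ k with hf
  have hnorm : Summable (fun k => ‖cc k * y ^ k‖) := by
    refine hs.congr fun k => ?_
    rw [Real.norm_of_nonneg (mul_nonneg (cc_nonneg k) (pow_nonneg hy0 k))]
  have hsq : f * f = (1 - y)⁻¹ := by
    rw [hf, tsum_mul_tsum_eq_tsum_sum_antidiagonal_of_summable_norm hnorm hnorm]
    have : ∀ n : ℕ, ∑ kl ∈ Finset.HasAntidiagonal.antidiagonal n,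
        (cc kl.1 * y ^ kl.1) * (cc kl.2 * y ^ kl.2) = y ^ n := by
      intro n
      rw [Finset.Nat.sum_antidiagonal_eq_sum_range_succ_mk]
      have : ∀ k ∈ range (n+1), (cc k * y ^ k) * (cc (n-k) * y ^ (n-k)) =
          (cc k * cc (n - k)) * y ^ n := by
        intro k hk
        rw [Finset.mem_range] at hk
        have hk' : k ≤ n := Nat.lt_succ_iff.mp hk
        have : y ^ k * y ^ (n - k) = y ^ n := by
          rw [← pow_add]
          congr 1
          omega
        calc (cc k * y ^ k) * (cc (n-k) * y ^ (n-k))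
            = (cc k * cc (n - k)) * (y ^ k * y ^ (n-k)) := by ring
          _ = (cc k * cc (n - k)) * y ^ n := by rw [this]
      rw [Finset.sum_congr rfl this, ← Finset.sum_mul, cc_conv n, one_mul]
    rw [tsum_congr this, tsum_geometric_of_lt_one hy0 hy1]
  have hfpos : 0 < f := by
    have h1 : cc 0 * y ^ 0 ≤ f := by
      exact Summable.le_tsum hs 0 fun j _ => mul_nonneg (cc_nonneg j) (pow_nonneg hy0 j)
    simp [cc_zero] at h1
    linarith
  have hfval : f = (Real.sqrt (1 - y))⁻¹ := by
    rw [← Real.sqrt_inv]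
    rw [← Real.sqrt_sq hfpos.le, ← hsq]
    ring_nf
  rw [← hfval]
  exact hs.hasSum

lemma integrable_pow (k : ℕ) : Integrable (fun t : ℝ => (((t:ℝ)^2 + 1) ^ (k+1))⁻¹) := by
  have hcont : Continuous (fun t : ℝ => (((t:ℝ)^2 + 1) ^ (k+1))⁻¹) := by
    refine Continuous.inv₀ (by continuity) fun t => ?_
    positivity
  refine integrable_inv_one_add_sq.mono' hcont.aestronglyMeasurable ?_
  refine Eventually.of_forall fun t => ?_
  rw [Real.norm_of_nonneg (by positivity)]
  rw [inv_le_inv₀ (by positivity) (by positivity)]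
  calc (1 : ℝ) + t^2 = (t^2 + 1)^1 := by ring
    _ ≤ (t^2+1)^(k+1) := pow_le_pow_right₀ (by nlinarith [sq_nonneg t]) (by omega)

lemma integrable_sq_mul_pow (k : ℕ) :
    Integrable (fun t : ℝ => t^2 * (((t:ℝ)^2 + 1) ^ (k+2))⁻¹) := by
  have hcont : Continuous (fun t : ℝ => t^2 * (((t:ℝ)^2 + 1) ^ (k+2))⁻¹) := by
    refine Continuous.mul (by continuity) (Continuous.inv₀ (by continuity) fun t => by positivity)
  refine (integrable_pow k).mono' hcont.aestronglyMeasurable ?_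
  refine Eventually.of_forall fun t => ?_
  rw [Real.norm_of_nonneg (by positivity)]
  have hC : (((t:ℝ)^2+1)^(k+1))⁻¹ = (t^2+1) * (((t:ℝ)^2+1)^(k+2))⁻¹ := by
    have hne : ((t:ℝ)^2 + 1) ≠ 0 := by positivity
    field_simp
    ring
  rw [hC]
  exact mul_le_mul_of_nonneg_right (by linarith [sq_nonneg t]) (by positivity)



lemma II_eq_two_J (k : ℕ) : II k = 2 * ∫ t in Ioi (0:ℝ), (((t:ℝ)^2 + 1) ^ (k+1))⁻¹ := by
  rw [← integral_comp_abs (f := fun t => ((t^2 + 1) ^ (k+1))⁻¹)]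
  unfold II
  congr 1
  ext t
  rw [sq_abs]

lemma II_zero : II 0 = Real.pi := by
  unfold II
  rw [← integral_univ_inv_one_add_sq]
  congr 1; ext t; rw [pow_one, add_comm]

lemma II_succ (k : ℕ) : II (k+1) = II k * ((2 * k + 1) / (2 * k + 2)) := by
  -- F t = t * ((t^2+1)^(k+1))⁻¹, F' = (t²+1)^{-(k+1)} - (2k+2) t² (t²+1)^{-(k+2)}
  set F : ℝ → ℝ := fun t => t * (((t:ℝ)^2 + 1) ^ (k+1))⁻¹ with hF
  set F' : ℝ → ℝ := fun t =>
    (((t:ℝ)^2 + 1) ^ (k+1))⁻¹ - (2*k+2) * (t^2 * (((t:ℝ)^2 + 1) ^ (k+2))⁻¹) with hF'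
  have hderiv : ∀ t : ℝ, HasDerivAt F (F' t) t := by
    intro t
    have h1 : HasDerivAt (fun t : ℝ => t^2 + 1) (2*t) t := by
      simpa using ((hasDerivAt_id t).pow 2).add_const 1
    have h2 := h1.pow (k+1)
    have hne : ((t:ℝ)^2 + 1) ^ (k+1) ≠ 0 := by positivity
    have h3 := h2.inv hne
    have h4 := (hasDerivAt_id t).mul h3
    refine h4.congr_deriv ?_
    simp only [hF', id_eq, one_mul, Pi.pow_apply, Pi.inv_apply, Nat.add_sub_cancel, Nat.cast_add, Nat.cast_one]
    have hne2 : ((t:ℝ)^2 + 1) ≠ 0 := by positivity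
    field_simp
    ring
  have hFint : IntegrableOn F' (Ioi (0:ℝ)) := by
    refine Integrable.integrableOn ?_
    exact (integrable_pow k).sub ((integrable_sq_mul_pow k).const_mul _)
  have htend : Tendsto F atTop (𝓝 0) := by
    have hb : ∀ᶠ t in atTop, ‖F t‖ ≤ t⁻¹ := by
      filter_upwards [eventually_ge_atTop (1:ℝ)] with t ht
      have ht0 : (0:ℝ) < t := lt_of_lt_of_le one_pos ht
      rw [Real.norm_of_nonneg (by positivity)]
      have h1 : t^2 ≤ (t^2+1)^(k+1) := by
        calc t^2 ≤ t^2 + 1 := by linarith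
          _ = (t^2+1)^1 := by ring
          _ ≤ (t^2+1)^(k+1) := pow_le_pow_right₀ (by nlinarith) (by omega)
      calc t * ((t^2+1)^(k+1))⁻¹ ≤ t * (t^2)⁻¹ := by
            refine mul_le_mul_of_nonneg_left ?_ ht0.le
            exact (inv_le_inv₀ (by positivity) (by positivity)).mpr h1
        _ = t⁻¹ := by
            rw [sq]
            field_simp
    have : Tendsto (fun t : ℝ => t⁻¹) atTop (𝓝 0) := tendsto_inv_atTop_zero
    exact squeeze_zero_norm' hb this
  have hFTC := integral_Ioi_of_hasDerivAt_of_tendsto' (a := 0)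
    (fun t _ => hderiv t) hFint htend
  have hF0 : F 0 = 0 := by simp [hF]
  rw [hF0, sub_zero] at hFTC
  -- split the integral
  have hsplit : ∫ t in Ioi (0:ℝ), F' t =
      (∫ t in Ioi (0:ℝ), (((t:ℝ)^2 + 1) ^ (k+1))⁻¹) -
        (2*k+2) * ∫ t in Ioi (0:ℝ), t^2 * (((t:ℝ)^2 + 1) ^ (k+2))⁻¹ := by
    rw [integral_sub ((integrable_pow k).integrableOn)
      (((integrable_sq_mul_pow k).const_mul _).integrableOn), MeasureTheory.integral_const_mul]
  -- t² (t²+1)^{-(k+2)} = (t²+1)^{-(k+1)} - (t²+1)^{-(k+2)}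
  have hptwise : ∫ t in Ioi (0:ℝ), t^2 * (((t:ℝ)^2 + 1) ^ (k+2))⁻¹ =
      (∫ t in Ioi (0:ℝ), (((t:ℝ)^2 + 1) ^ (k+1))⁻¹) -
        ∫ t in Ioi (0:ℝ), (((t:ℝ)^2 + 1) ^ (k+2))⁻¹ := by
    rw [← integral_sub ((integrable_pow k).integrableOn)
      ((integrable_pow (k+1)).integrableOn)]
    refine setIntegral_congr_fun measurableSet_Ioi fun t _ => ?_
    have hne : ((t:ℝ)^2 + 1) ≠ 0 := by positivity
    field_simp
    ring
  set Jk := ∫ t in Ioi (0:ℝ), (((t:ℝ)^2 + 1) ^ (k+1))⁻¹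
  set Jk1 := ∫ t in Ioi (0:ℝ), (((t:ℝ)^2 + 1) ^ (k+2))⁻¹
  have hkey : 0 = Jk - (2*k+2) * (Jk - Jk1) := by
    rw [← hFTC, hsplit, hptwise]
  have h2 : II k = 2 * Jk := II_eq_two_J k
  have h3 : II (k+1) = 2 * Jk1 := II_eq_two_J (k+1)
  rw [h2, h3]
  have : Jk1 = Jk * ((2*k+1)/(2*k+2)) := by
    have hne : (2*(k:ℝ)+2) ≠ 0 := by positivity
    field_simp
    linarith [hkey]
  rw [this]
  ring

lemma II_eq (k : ℕ) : II k = Real.pi * cc k := by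
  induction k with
  | zero => rw [II_zero, cc_zero, mul_one]
  | succ n ih => rw [II_succ, ih, cc_succ]; ring

lemma Kcont (a b : ℝ) (ha : 0 < a) (hb : 0 < b) :
    Continuous (fun t : ℝ => (Real.sqrt ((t^2 + a^2) * (t^2 + b^2)))⁻¹) := by
  refine Continuous.inv₀ (Real.continuous_sqrt.comp (by continuity)) fun t => ?_
  refine ne_of_gt (Real.sqrt_pos.mpr ?_)
  positivity

lemma Kbound (a b m : ℝ) (hm : 0 < m) (hma : m ≤ a) (hmb : m ≤ b) (t : ℝ) :
    (Real.sqrt ((t^2 + a^2) * (t^2 + b^2)))⁻¹ ≤ (min 1 (m^2))⁻¹ * (1 + t^2)⁻¹ := by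
  have hmin : 0 < min 1 (m^2) := lt_min one_pos (by positivity)
  have h1 : min 1 (m^2) * (1 + t^2) ≤ t^2 + m^2 := by
    rcases le_total m 1 with h | h
    · have : min 1 (m^2) = m^2 := min_eq_right (by nlinarith)
      rw [this]
      have hm2 : m^2 ≤ 1 := by nlinarith
      nlinarith [sq_nonneg t, mul_le_mul_of_nonneg_right hm2 (sq_nonneg t)]
    · have : min 1 (m^2) = 1 := min_eq_left (by nlinarith)
      rw [this]; nlinarith
  have h2 : t^2 + m^2 ≤ Real.sqrt ((t^2 + a^2) * (t^2 + b^2)) := by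
    have hp : (t^2 + m^2)^2 ≤ (t^2 + a^2) * (t^2 + b^2) := by
      have h3 : t^2 + m^2 ≤ t^2 + a^2 := by nlinarith
      have h4 : t^2 + m^2 ≤ t^2 + b^2 := by nlinarith
      nlinarith [sq_nonneg t, sq_nonneg m]
    calc t^2 + m^2 = Real.sqrt ((t^2+m^2)^2) := (Real.sqrt_sq (by positivity)).symm
      _ ≤ _ := Real.sqrt_le_sqrt hp
  rw [← mul_inv]
  refine inv_anti₀ (by positivity) ?_
  linarith

lemma integrableK (a b : ℝ) (ha : 0 < a) (hb : 0 < b) :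
    Integrable (fun t : ℝ => (Real.sqrt ((t^2 + a^2) * (t^2 + b^2)))⁻¹) := by
  set m := min a b with hm
  have hm0 : 0 < m := lt_min ha hb
  refine (integrable_inv_one_add_sq.const_mul ((min 1 (m^2))⁻¹)).mono'
    (Kcont a b ha hb).aestronglyMeasurable ?_
  refine Eventually.of_forall fun t => ?_
  rw [Real.norm_of_nonneg (by positivity)]
  exact Kbound a b m hm0 (min_le_left _ _) (min_le_right _ _) t

lemma K_gauss (a b : ℝ) (ha : 0 < a) (hb : 0 < b) :
    KK ((a+b)/2) (Real.sqrt (a*b)) = KK a b := by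
  set A := (a+b)/2 with hA
  set B := Real.sqrt (a*b) with hB
  have hab : 0 < a * b := mul_pos ha hb
  have hB2 : B^2 = a*b := Real.sq_sqrt hab.le
  set φ : ℝ → ℝ := fun t => (t - a*b/t)/2 with hφ
  set φ' : ℝ → ℝ := fun t => (1 + a*b/t^2)/2 with hφ'
  set g : ℝ → ℝ := fun u => (Real.sqrt ((u^2 + A^2) * (u^2 + B^2)))⁻¹ with hg
  -- image
  have himg : φ '' (Ioi 0) = univ := by
    apply Set.eq_univ_of_forall
    intro u
    have hru : 0 ≤ u^2 + a*b := by positivity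
    set t := u + Real.sqrt (u^2 + a*b) with ht
    have hsq : Real.sqrt (u^2 + a*b) ^ 2 = u^2 + a*b := Real.sq_sqrt hru
    have htpos : 0 < t := by
      have h1 : |u| < Real.sqrt (u^2 + a*b) := by
        have : Real.sqrt (u^2) < Real.sqrt (u^2 + a*b) := by
          refine Real.sqrt_lt_sqrt (sq_nonneg u) (by linarith)
        rwa [Real.sqrt_sq_eq_abs] at this
      have := neg_abs_le u
      linarith
    refine ⟨t, htpos, ?_⟩
    have hteq : t^2 - 2*u*t - a*b = 0 := by
      rw [ht]; nlinarith [hsq]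
    show (t - a*b/t)/2 = u
    field_simp
    linarith [hteq]
  -- derivative
  have hderiv : ∀ t ∈ Ioi (0:ℝ), HasDerivWithinAt φ (φ' t) (Ioi 0) t := by
    intro t ht
    have ht0 : t ≠ 0 := ne_of_gt ht
    have h2 := ((hasDerivAt_id t).sub ((hasDerivAt_inv ht0).const_mul (a*b))).div_const 2
    have heq : φ' t = (1 - a*b * -((t:ℝ)^2)⁻¹)/2 := by
      rw [hφ']
      have : t ≠ 0 := ht0
      field_simp
      ring
    rw [heq]
    have hfun : φ = fun y : ℝ => (id y - a*b*y⁻¹)/2 := by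
      funext y
      rw [hφ]
      simp [div_eq_mul_inv]
    rw [hfun]
    exact h2.hasDerivWithinAt
  -- injectivity
  have hinj : InjOn φ (Ioi 0) := by
    have : StrictMonoOn φ (Ioi 0) := by
      intro s hs t ht hst
      simp only [hφ]
      have hs0 : (0:ℝ) < s := hs
      have ht0 : (0:ℝ) < t := ht
      have : a*b/t < a*b/s := by
        exact div_lt_div_of_pos_left hab hs0 hst
      have h2 : s - a*b/s < t - a*b/t := by linarith
      linarith
    exact this.injOn
  -- main computation
  have key : ∀ t ∈ Ioi (0:ℝ), |φ' t| • g (φ t) =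
      2 * (Real.sqrt ((t^2 + a^2) * (t^2 + b^2)))⁻¹ := by
    intro t ht
    have ht0 : (0:ℝ) < t := ht
    have htn : t ≠ 0 := ne_of_gt ht0
    have hP : 0 < (t^2 + a^2) * (t^2 + b^2) := by positivity
    have hφ'pos : 0 < φ' t := by
      rw [hφ']
      have : 0 < a*b/t^2 := by positivity
      linarith
    have e1 : (φ t)^2 + B^2 = ((t^2 + a*b)/(2*t))^2 := by
      rw [hφ, hB2]; field_simp; ring
    have e2 : (φ t)^2 + A^2 = ((t^2 + a^2) * (t^2 + b^2))/(4*t^2) := by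
      rw [hφ, hA]; field_simp; ring
    have e3 : ((φ t)^2 + A^2) * ((φ t)^2 + B^2) =
        (Real.sqrt ((t^2 + a^2) * (t^2 + b^2)) * (t^2 + a*b) / (4*t^2))^2 := by
      rw [e1, e2]
      conv_rhs => rw [div_pow, mul_pow, Real.sq_sqrt hP.le]
      field_simp
      ring
    have e4 : g (φ t) = (Real.sqrt ((t^2 + a^2) * (t^2 + b^2)) * (t^2 + a*b) / (4*t^2))⁻¹ := by
      rw [hg]
      simp only
      rw [e3, Real.sqrt_sq (by positivity)]
    rw [e4, abs_of_pos hφ'pos, smul_eq_mul, hφ']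
    have hsp : 0 < Real.sqrt ((t^2 + a^2) * (t^2 + b^2)) := Real.sqrt_pos.mpr hP
    have htab : 0 < t^2 + a*b := by positivity
    field_simp
    ring
  calc KK A B = ∫ u in univ, g u := by rw [hg, KK, setIntegral_univ]
    _ = ∫ u in φ '' (Ioi 0), g u := by rw [himg]
    _ = ∫ t in Ioi (0:ℝ), |φ' t| • g (φ t) :=
        integral_image_eq_integral_abs_deriv_smul measurableSet_Ioi hderiv hinj g
    _ = ∫ t in Ioi (0:ℝ), 2 * (Real.sqrt ((t^2 + a^2) * (t^2 + b^2)))⁻¹ :=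
        setIntegral_congr_fun measurableSet_Ioi key
    _ = 2 * ∫ t in Ioi (0:ℝ), (Real.sqrt ((t^2 + a^2) * (t^2 + b^2)))⁻¹ := by
        rw [MeasureTheory.integral_const_mul]
    _ = KK a b := by
        rw [KK, ← integral_comp_abs (f := fun t => (Real.sqrt ((t^2 + a^2) * (t^2 + b^2)))⁻¹)]
        congr 1; ext t; rw [sq_abs]

lemma K_diag (M : ℝ) (hM : 0 < M) : KK M M = Real.pi / M := by
  have h1 : KK M M = ∫ t : ℝ, ((t^2 + M^2))⁻¹ := by
    rw [KK]
    congr 1; ext t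
    have : (t^2 + M^2) * (t^2 + M^2) = (t^2+M^2)^2 := by ring
    rw [this, Real.sqrt_sq (by positivity)]
  rw [h1]
  -- substitute t = M s via image formula
  have himg : (fun s : ℝ => M * s) '' univ = univ := by
    apply Set.eq_univ_of_forall
    intro u
    exact ⟨u / M, trivial, by field_simp⟩
  have hderiv : ∀ s ∈ (univ : Set ℝ), HasDerivWithinAt (fun s : ℝ => M * s) M univ s :=
    fun s _ => by simpa using ((hasDerivAt_id s).const_mul M)
  have hinj : InjOn (fun s : ℝ => M * s) univ :=
    fun s _ t _ h => by
      have := mul_left_cancel₀ (ne_of_gt hM) h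
      exact this
  have := integral_image_eq_integral_abs_deriv_smul (f := fun s : ℝ => M * s)
    (f' := fun _ => M) MeasurableSet.univ hderiv hinj (fun u => ((u^2 + M^2))⁻¹)
  rw [himg] at this
  rw [← setIntegral_univ, this]
  have : ∀ s : ℝ, |M| • (((M*s)^2 + M^2))⁻¹ = M⁻¹ * (1 + s^2)⁻¹ := by
    intro s
    rw [abs_of_pos hM, smul_eq_mul]
    have : ((M*s)^2 + M^2) = M^2 * (1 + s^2) := by ring
    rw [this, mul_inv, sq]
    have : (0:ℝ) < 1 + s^2 := by positivity
    field_simp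
  rw [setIntegral_univ]
  rw [funext this, MeasureTheory.integral_const_mul, integral_univ_inv_one_add_sq]
  field_simp

section agmCore

variable {a b : ℝ}

lemma agm_pos_le (hb : 0 < b) (hba : b ≤ a) :
    ∀ n, 0 < (agmSeq a b n).2 ∧ (agmSeq a b n).2 ≤ (agmSeq a b n).1 := by
  intro n
  induction n with
  | zero => exact ⟨hb, hba⟩
  | succ n ih =>
    obtain ⟨h1, h2⟩ := ih
    have hA : 0 < (agmSeq a b n).1 := lt_of_lt_of_le h1 h2
    constructor
    · show 0 < Real.sqrt ((agmSeq a b n).1 * (agmSeq a b n).2)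
      exact Real.sqrt_pos.mpr (mul_pos hA h1)
    · show Real.sqrt ((agmSeq a b n).1 * (agmSeq a b n).2) ≤
        ((agmSeq a b n).1 + (agmSeq a b n).2) / 2
      set A := (agmSeq a b n).1
      set B := (agmSeq a b n).2
      have hsA : Real.sqrt A ^ 2 = A := Real.sq_sqrt hA.le
      have hsB : Real.sqrt B ^ 2 = B := Real.sq_sqrt h1.le
      have := two_mul_le_add_sq (Real.sqrt A) (Real.sqrt B)
      rw [hsA, hsB] at this
      rw [Real.sqrt_mul hA.le]
      linarith [this]

lemma agm_b_le (hb : 0 < b) (hba : b ≤ a) : ∀ n, b ≤ (agmSeq a b n).2 := by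
  intro n
  induction n with
  | zero => exact le_refl b
  | succ n ih =>
    obtain ⟨h1, h2⟩ := agm_pos_le hb hba n
    show b ≤ Real.sqrt ((agmSeq a b n).1 * (agmSeq a b n).2)
    calc b ≤ (agmSeq a b n).2 := ih
      _ = Real.sqrt ((agmSeq a b n).2 * (agmSeq a b n).2) := by
          rw [Real.sqrt_mul_self h1.le]
      _ ≤ Real.sqrt ((agmSeq a b n).1 * (agmSeq a b n).2) := by
          refine Real.sqrt_le_sqrt ?_
          exact mul_le_mul_of_nonneg_right h2 h1.le

lemma agm_anti (hb : 0 < b) (hba : b ≤ a) :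
    Antitone (fun n => (agmSeq a b n).1) := by
  refine antitone_nat_of_succ_le fun n => ?_
  obtain ⟨h1, h2⟩ := agm_pos_le hb hba n
  show ((agmSeq a b n).1 + (agmSeq a b n).2) / 2 ≤ (agmSeq a b n).1
  linarith

lemma agm_tendsto (hb : 0 < b) (hba : b ≤ a) :
    ∃ M : ℝ, b ≤ M ∧ Tendsto (fun n => (agmSeq a b n).1) atTop (𝓝 M) ∧
      Tendsto (fun n => (agmSeq a b n).2) atTop (𝓝 M) := by
  have hbd : BddBelow (range fun n => (agmSeq a b n).1) := by
    refine ⟨b, ?_⟩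
    rintro x ⟨n, rfl⟩
    exact le_trans (agm_b_le hb hba n) (agm_pos_le hb hba n).2
  have hA := tendsto_atTop_ciInf (agm_anti hb hba) hbd
  set M := ⨅ n, (agmSeq a b n).1 with hM
  refine ⟨M, ?_, hA, ?_⟩
  · refine le_ciInf fun n => ?_
    exact le_trans (agm_b_le hb hba n) (agm_pos_le hb hba n).2
  · have hA1 : Tendsto (fun n => (agmSeq a b (n+1)).1) atTop (𝓝 M) :=
      (tendsto_add_atTop_iff_nat 1).mpr hA
    have heq : ∀ n, (agmSeq a b n).2 = 2 * (agmSeq a b (n+1)).1 - (agmSeq a b n).1 := by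
      intro n
      show (agmSeq a b n).2 = 2 * (((agmSeq a b n).1 + (agmSeq a b n).2)/2) - (agmSeq a b n).1
      ring
    have : Tendsto (fun n => 2 * (agmSeq a b (n+1)).1 - (agmSeq a b n).1) atTop
        (𝓝 (2 * M - M)) := (hA1.const_mul 2).sub hA
    rw [show 2 * M - M = M by ring] at this
    exact this.congr fun n => (heq n).symm

lemma K_invariant (hb : 0 < b) (hba : b ≤ a) :
    ∀ n, KK (agmSeq a b n).1 (agmSeq a b n).2 = KK a b := by
  intro n
  induction n with
  | zero => rfl
  | succ n ih =>
    obtain ⟨h1, h2⟩ := agm_pos_le hb hba n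
    have hA : 0 < (agmSeq a b n).1 := lt_of_lt_of_le h1 h2
    calc KK (agmSeq a b (n+1)).1 (agmSeq a b (n+1)).2
        = KK (((agmSeq a b n).1 + (agmSeq a b n).2)/2)
            (Real.sqrt ((agmSeq a b n).1 * (agmSeq a b n).2)) := rfl
      _ = KK (agmSeq a b n).1 (agmSeq a b n).2 := K_gauss _ _ hA h1
      _ = KK a b := ih

lemma agm_core (hb : 0 < b) (hba : b ≤ a) :
    ∃ M : ℝ, 0 < M ∧ Tendsto (fun n => (agmSeq a b n).1) atTop (𝓝 M) ∧
      KK a b * M = Real.pi := by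
  obtain ⟨M, hbM, hA, hB⟩ := agm_tendsto hb hba
  have hM : 0 < M := lt_of_lt_of_le hb hbM
  refine ⟨M, hM, hA, ?_⟩
  -- dominated convergence
  have hKtend : Tendsto (fun n => KK (agmSeq a b n).1 (agmSeq a b n).2) atTop
      (𝓝 (KK M M)) := by
    unfold KK
    refine tendsto_integral_of_dominated_convergence
      (bound := fun t => (min 1 (b^2))⁻¹ * (1 + t^2)⁻¹) ?_ ?_ ?_ ?_
    · intro n
      obtain ⟨h1, h2⟩ := agm_pos_le hb hba n
      exact (Kcont _ _ (lt_of_lt_of_le h1 h2) h1).aestronglyMeasurable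
    · exact integrable_inv_one_add_sq.const_mul _
    · intro n
      refine Eventually.of_forall fun t => ?_
      rw [Real.norm_of_nonneg (by positivity)]
      obtain ⟨h1, h2⟩ := agm_pos_le hb hba n
      have hbB := agm_b_le hb hba n
      exact Kbound _ _ b hb (le_trans hbB h2) hbB t
    · refine Eventually.of_forall fun t => ?_
      have h1 : Tendsto (fun n => (t^2 + (agmSeq a b n).1^2) * (t^2 + (agmSeq a b n).2^2))
          atTop (𝓝 ((t^2 + M^2) * (t^2 + M^2))) :=
        ((tendsto_const_nhds.add ((hA.pow 2))).mul (tendsto_const_nhds.add ((hB.pow 2))))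
      have h2 := (Real.continuous_sqrt.tendsto _).comp h1
      refine Tendsto.inv₀ h2 ?_
      refine ne_of_gt (Real.sqrt_pos.mpr ?_)
      positivity
  have hconst : ∀ n, KK (agmSeq a b n).1 (agmSeq a b n).2 = KK a b :=
    K_invariant hb hba
  have : Tendsto (fun _ : ℕ => KK a b) atTop (𝓝 (KK M M)) := by
    refine hKtend.congr fun n => hconst n
  have hKM : KK a b = KK M M := tendsto_nhds_unique tendsto_const_nhds this
  rw [hKM, K_diag M hM]
  field_simp

end agmCore

lemma II_nonneg (k : ℕ) : 0 ≤ II k := by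
  unfold II
  exact integral_nonneg fun t => by positivity

lemma K_series (x : ℝ) (hx : |x| < 1) :
    KK 1 (Real.sqrt (1 - x^2)) = Real.pi * ∑' k : ℕ, (cc k)^2 * x^(2*k) := by
  have hx2 : x^2 < 1 := by
    rw [sq_lt_one_iff_abs_lt_one]; exact hx
  have hx2' : (0:ℝ) ≤ 1 - x^2 := by linarith
  have hc2 : Real.sqrt (1 - x^2) ^ 2 = 1 - x^2 := Real.sq_sqrt hx2'
  set F : ℕ → ℝ → ℝ := fun k t => cc k * x^(2*k) * (((t:ℝ)^2+1)^(k+1))⁻¹ with hF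
  have hxk : ∀ k : ℕ, (0:ℝ) ≤ x^(2*k) := fun k => by
    rw [pow_mul]; positivity
  -- pointwise sum
  have hpt : ∀ t : ℝ, ∑' k, F k t = (Real.sqrt ((t^2 + 1^2) * (t^2 + Real.sqrt (1-x^2)^2)))⁻¹ := by
    intro t
    have ht1 : (0:ℝ) < t^2 + 1 := by positivity
    set y := x^2 / (t^2+1) with hy
    have hy0 : 0 ≤ y := by positivity
    have hy1 : y < 1 := by
      rw [hy, div_lt_one ht1]
      nlinarith [sq_nonneg t]
    have hS := (hasSum_cc hy0 hy1).mul_left ((t^2+1)⁻¹)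
    have hterm : ∀ k : ℕ, (t^2+1)⁻¹ * (cc k * y ^ k) = F k t := by
      intro k
      rw [hF, hy]
      simp only
      rw [div_pow, pow_mul x 2 k, pow_succ (t^2+1) k, mul_inv, div_eq_mul_inv]
      ring
    have hval : (t^2+1)⁻¹ * (Real.sqrt (1 - y))⁻¹ =
        (Real.sqrt ((t^2 + 1^2) * (t^2 + Real.sqrt (1-x^2)^2)))⁻¹ := by
      rw [hc2, one_pow]
      have harg : (t^2 + 1) * (t^2 + (1 - x^2)) = (t^2+1)^2 * (1 - y) := by
        rw [hy]; field_simp; ring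
      rw [harg, Real.sqrt_mul (by positivity), Real.sqrt_sq ht1.le, mul_inv]
    rw [← hval, ← (hS.congr_fun fun k => (hterm k).symm).tsum_eq]
  -- summability of integrals
  have hFint : ∀ k : ℕ, Integrable (F k) := fun k => (integrable_pow k).const_mul _
  have hInorm : ∀ k : ℕ, (∫ t : ℝ, ‖F k t‖) = cc k * x^(2*k) * II k := by
    intro k
    unfold II
    rw [← MeasureTheory.integral_const_mul]
    congr 1
    ext t
    have hnn : 0 ≤ F k t := by
      rw [hF]; simp only
      have := cc_nonneg k; have := hxk k
      positivity
    rw [Real.norm_of_nonneg hnn]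
  have hFsum : Summable (fun k => ∫ t : ℝ, ‖F k t‖) := by
    refine Summable.of_nonneg_of_le
      (fun k => integral_nonneg fun t => norm_nonneg _) (fun k => ?_)
      ((summable_geometric_of_lt_one (sq_nonneg x) hx2).mul_left Real.pi)
    calc (∫ t : ℝ, ‖F k t‖) = cc k * cc k * (Real.pi * (x^2)^k) := by
          rw [hInorm k, II_eq k, pow_mul]; ring
      _ ≤ 1 * (Real.pi * (x^2)^k) := by
          refine mul_le_mul_of_nonneg_right ?_ (by positivity)
          exact mul_le_one₀ (cc_le_one k) (cc_nonneg k) (cc_le_one k)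
      _ = Real.pi * (x^2)^k := one_mul _
  have hswap := integral_tsum_of_summable_integral_norm hFint hFsum
  calc KK 1 (Real.sqrt (1-x^2))
      = ∫ t : ℝ, ∑' k, F k t := by
        unfold KK
        exact integral_congr_ae (Eventually.of_forall fun t => (hpt t).symm)
    _ = ∑' k, ∫ t : ℝ, F k t := hswap.symm
    _ = ∑' k, cc k * x^(2*k) * (Real.pi * cc k) := by
        refine tsum_congr fun k => ?_
        rw [hF]
        simp only
        rw [MeasureTheory.integral_const_mul,
          show (∫ t : ℝ, (((t:ℝ)^2+1)^(k+1))⁻¹) = Real.pi * cc k from II_eq k]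
    _ = Real.pi * ∑' k : ℕ, (cc k)^2 * x^(2*k) := by
        rw [← tsum_mul_left]
        exact tsum_congr fun k => by ring

theorem inv_agm_eq_hypergeometric_series (x : ℝ) (hx : |x| < 1) :
    1 / agm (1 + x) (1 - x) =
      ∑' k : ℕ, (((2 * k).choose k : ℝ) / 4 ^ k) ^ 2 * x ^ (2 * k) := by
  obtain ⟨hx1, hx2⟩ := abs_lt.mp hx
  have h1x : 0 < 1 + x := by linarith
  have h1x' : 0 < 1 - x := by linarith
  have hprod : 0 < 1 - x^2 := by nlinarith
  set c := Real.sqrt (1 - x^2) with hc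
  have hc0 : 0 < c := Real.sqrt_pos.mpr hprod
  have hc1 : c ≤ 1 := Real.sqrt_le_one.mpr (by nlinarith [sq_nonneg x])
  obtain ⟨M, hM, hTend, hKM⟩ := agm_core hc0 hc1
  -- shift
  have hshift : ∀ a b : ℝ, ∀ n, agmSeq a b (n+1) = agmSeq ((a+b)/2) (Real.sqrt (a*b)) n := by
    intro a b n
    induction n with
    | zero => rfl
    | succ n ih =>
      rw [show agmSeq a b (n+2) =
        (((agmSeq a b (n+1)).1 + (agmSeq a b (n+1)).2) / 2,
          Real.sqrt ((agmSeq a b (n+1)).1 * (agmSeq a b (n+1)).2)) from rfl, ih]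
      rfl
  have hspec : ∀ n, agmSeq (1+x) (1-x) (n+1) = agmSeq 1 c n := by
    intro n
    rw [hshift]
    congr 1
    · ring
    · rw [hc]
      congr 1
      ring
  have hTendA : Tendsto (fun n => (agmSeq (1+x) (1-x) n).1) atTop (𝓝 M) := by
    refine (tendsto_add_atTop_iff_nat 1).mp ?_
    refine hTend.congr fun n => ?_
    rw [hspec n]
  have hagm : agm (1+x) (1-x) = M := hTendA.limUnder_eq
  have hpi : (0:ℝ) < Real.pi := Real.pi_pos
  have hKc : KK 1 c = Real.pi * ∑' k : ℕ, (cc k)^2 * x^(2*k) := K_series x hx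
  rw [hagm]
  rw [hKc] at hKM
  have hsum : ∑' k : ℕ, (((2 * k).choose k : ℝ) / 4 ^ k) ^ 2 * x ^ (2 * k) =
      ∑' k : ℕ, (cc k)^2 * x^(2*k) := rfl
  rw [hsum]
  have hne : M ≠ 0 := ne_of_gt hM
  set S := ∑' k : ℕ, (cc k)^2 * x^(2*k) with hS
  have h2 : Real.pi * (S * M) = Real.pi * 1 := by rw [mul_one]; linear_combination hKM
  have h3 := mul_left_cancel₀ (ne_of_gt hpi) h2
  field_simp
  linarith [h3]
end

section
/- For every real q with 0 < q < 1, M(θ₃(q)², θ₄(q)²) = 1, where M is the arithmetic–geometric mean and θ₃, θ₄ are the Jacobi theta functions (which take positive real values for 0 < q < 1). -/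
open Filter Topology

set_option maxHeartbeats 1000000

/-- Real-valued Jacobi theta function `θ₃` for real `q`. -/
noncomputable def theta3Real (q : ℝ) : ℝ := ∑' n : ℤ, q ^ (n ^ 2)

/-- Real-valued Jacobi theta function `θ₄` for real `q`. -/
noncomputable def theta4Real (q : ℝ) : ℝ := ∑' n : ℤ, (-1 : ℝ) ^ n * q ^ (n ^ 2)

section Aux

variable {q : ℝ}

private lemma zpow_sq_eq (n : ℤ) : q ^ (n ^ 2) = q ^ (n.natAbs ^ 2) := by
  rw [← zpow_natCast q (n.natAbs ^ 2)]
  congr 1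
  push_cast [Int.natCast_natAbs]
  rw [sq_abs]

private lemma q_zpow_nat (n : ℕ) : q ^ ((n : ℤ) ^ 2) = q ^ (n ^ 2) := by
  rw [zpow_sq_eq]; simp

private lemma q_zpow_neg_nat (n : ℕ) : q ^ ((-((n : ℤ) + 1)) ^ 2) = q ^ ((n + 1) ^ 2) := by
  rw [zpow_sq_eq]
  have h : (-((n : ℤ) + 1)).natAbs = n + 1 := by omega
  rw [h]

private lemma summable_theta_nat (h0 : 0 ≤ q) (h1 : q < 1) :
    Summable fun n : ℕ => q ^ (n ^ 2) :=
  Summable.of_nonneg_of_le (fun n => by positivity)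
    (fun n => pow_le_pow_of_le_one h0 h1.le (Nat.le_self_pow two_ne_zero n))
    (summable_geometric_of_lt_one h0 h1)

private lemma summable_theta_nat' (h0 : 0 ≤ q) (h1 : q < 1) :
    Summable fun n : ℕ => q ^ ((n + 1) ^ 2) := by
  have := (summable_theta_nat h0 h1).comp_injective Nat.succ_injective
  exact this.congr fun n => rfl

private lemma summable_theta_int (h0 : 0 < q) (h1 : q < 1) :
    Summable fun n : ℤ => q ^ (n ^ 2) :=
  Summable.of_nat_of_neg_add_one
    ((summable_theta_nat h0.le h1).congr fun n => (q_zpow_nat n).symm)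
    ((summable_theta_nat' h0.le h1).congr fun n => (q_zpow_neg_nat n).symm)

private lemma norm_summable_theta_int (h0 : 0 < q) (h1 : q < 1) :
    Summable fun n : ℤ => ‖q ^ (n ^ 2)‖ :=
  (summable_theta_int h0 h1).congr fun n =>
    (Real.norm_of_nonneg (zpow_pos h0 _).le).symm

private lemma norm_summable_theta4_int (h0 : 0 < q) (h1 : q < 1) :
    Summable fun n : ℤ => ‖(-1 : ℝ) ^ n * q ^ (n ^ 2)‖ :=
  (summable_theta_int h0 h1).congr fun n => by
    rw [norm_mul, norm_zpow, norm_neg, norm_one, one_zpow, one_mul,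
      Real.norm_of_nonneg (zpow_pos h0 _).le]

private lemma neg_one_zpow_inv (v : ℤ) : ((-1 : ℝ) ^ v)⁻¹ = (-1 : ℝ) ^ v := by
  rcases Int.even_or_odd v with h | h
  · rw [h.neg_one_zpow]; norm_num
  · rw [h.neg_one_zpow]; norm_num

private lemma neg_one_zpow_sub (u v : ℤ) : (-1 : ℝ) ^ (u - v) = (-1 : ℝ) ^ (u + v) := by
  have hne : (-1 : ℝ) ≠ 0 := by norm_num
  rw [zpow_sub₀ hne, div_eq_mul_inv, neg_one_zpow_inv, zpow_add₀ hne]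

private lemma phi_injective : Function.Injective (fun p : ℤ × ℤ => (p.1 + p.2, p.1 - p.2)) := by
  intro p p' h
  rw [Prod.ext_iff] at h ⊢
  simp only at h ⊢
  omega

private lemma qsplit (hq : q ≠ 0) (u v : ℤ) :
    q ^ ((u + v) ^ 2) * q ^ ((u - v) ^ 2) = (q ^ 2) ^ (u ^ 2) * (q ^ 2) ^ (v ^ 2) := by
  have h2 : (q : ℝ) ^ (2 : ℤ) = q ^ 2 := by rw [zpow_two, pow_two]
  rw [← zpow_add₀ hq, show (u + v) ^ 2 + (u - v) ^ 2 = 2 * u ^ 2 + 2 * v ^ 2 by ring,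
    zpow_add₀ hq, zpow_mul, zpow_mul, h2]

private lemma theta3_sq_eq (h0 : 0 < q) (h1 : q < 1) :
    theta3Real q ^ 2 = ∑' p : ℤ × ℤ, q ^ (p.1 ^ 2) * q ^ (p.2 ^ 2) := by
  rw [theta3Real, sq]
  exact tsum_mul_tsum_of_summable_norm (f := fun n : ℤ => q ^ (n ^ 2))
    (g := fun n : ℤ => q ^ (n ^ 2))
    (norm_summable_theta_int h0 h1) (norm_summable_theta_int h0 h1)

private lemma theta4_sq_eq (h0 : 0 < q) (h1 : q < 1) :
    theta4Real q ^ 2 = ∑' p : ℤ × ℤ,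
      ((-1 : ℝ) ^ p.1 * q ^ (p.1 ^ 2)) * ((-1 : ℝ) ^ p.2 * q ^ (p.2 ^ 2)) := by
  rw [theta4Real, sq]
  exact tsum_mul_tsum_of_summable_norm (f := fun n : ℤ => (-1 : ℝ) ^ n * q ^ (n ^ 2))
    (g := fun n : ℤ => (-1 : ℝ) ^ n * q ^ (n ^ 2))
    (norm_summable_theta4_int h0 h1) (norm_summable_theta4_int h0 h1)

/-- Key identity 1: `θ₃(q)² + θ₄(q)² = 2 θ₃(q²)²`. -/
private lemma theta_add_identity (h0 : 0 < q) (h1 : q < 1) :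
    theta3Real q ^ 2 + theta4Real q ^ 2 = 2 * theta3Real (q ^ 2) ^ 2 := by
  have hqne : q ≠ 0 := h0.ne'
  have hne : (-1 : ℝ) ≠ 0 := by norm_num
  have hq20 : (0 : ℝ) < q ^ 2 := by positivity
  have hq21 : q ^ 2 < 1 := by nlinarith
  have hF : Summable fun p : ℤ × ℤ => q ^ (p.1 ^ 2) * q ^ (p.2 ^ 2) :=
    summable_mul_of_summable_norm (f := fun n : ℤ => q ^ (n ^ 2))
      (g := fun n : ℤ => q ^ (n ^ 2))
      (norm_summable_theta_int h0 h1) (norm_summable_theta_int h0 h1)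
  have hG : Summable fun p : ℤ × ℤ =>
      ((-1 : ℝ) ^ p.1 * q ^ (p.1 ^ 2)) * ((-1 : ℝ) ^ p.2 * q ^ (p.2 ^ 2)) :=
    summable_mul_of_summable_norm (f := fun n : ℤ => (-1 : ℝ) ^ n * q ^ (n ^ 2))
      (g := fun n : ℤ => (-1 : ℝ) ^ n * q ^ (n ^ 2))
      (norm_summable_theta4_int h0 h1) (norm_summable_theta4_int h0 h1)
  have hsum : theta3Real q ^ 2 + theta4Real q ^ 2
      = ∑' p : ℤ × ℤ, (q ^ (p.1 ^ 2) * q ^ (p.2 ^ 2)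
          + ((-1 : ℝ) ^ p.1 * q ^ (p.1 ^ 2)) * ((-1 : ℝ) ^ p.2 * q ^ (p.2 ^ 2))) := by
    rw [theta3_sq_eq h0 h1, theta4_sq_eq h0 h1]
    exact (Summable.tsum_add hF hG).symm
  rw [hsum]
  have hcongr : ∀ p : ℤ × ℤ,
      q ^ (p.1 ^ 2) * q ^ (p.2 ^ 2)
        + ((-1 : ℝ) ^ p.1 * q ^ (p.1 ^ 2)) * ((-1 : ℝ) ^ p.2 * q ^ (p.2 ^ 2))
      = (1 + (-1 : ℝ) ^ (p.1 + p.2)) * (q ^ (p.1 ^ 2) * q ^ (p.2 ^ 2)) := by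
    intro p
    rw [zpow_add₀ hne]
    ring
  rw [tsum_congr hcongr]
  have hsupp : Function.support
      (fun p : ℤ × ℤ => (1 + (-1 : ℝ) ^ (p.1 + p.2)) * (q ^ (p.1 ^ 2) * q ^ (p.2 ^ 2)))
      ⊆ Set.range (fun p : ℤ × ℤ => (p.1 + p.2, p.1 - p.2)) := by
    intro p hp
    rcases Int.even_or_odd (p.1 + p.2) with h | h
    · obtain ⟨u, hu⟩ := h
      exact ⟨(u, p.1 - u), by rw [Prod.ext_iff]; constructor <;> simp <;> omega⟩
    · exfalso
      apply hp
      beta_reduce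
      rw [h.neg_one_zpow]
      ring
  rw [← phi_injective.tsum_eq hsupp]
  have hval : ∀ p : ℤ × ℤ,
      (1 + (-1 : ℝ) ^ ((p.1 + p.2) + (p.1 - p.2)))
        * (q ^ ((p.1 + p.2) ^ 2) * q ^ ((p.1 - p.2) ^ 2))
      = 2 * ((q ^ 2) ^ (p.1 ^ 2) * (q ^ 2) ^ (p.2 ^ 2)) := by
    intro p
    have he : Even ((p.1 + p.2) + (p.1 - p.2)) := ⟨p.1, by ring⟩
    rw [he.neg_one_zpow, qsplit hqne]
    ring
  rw [tsum_congr hval, tsum_mul_left]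
  congr 1
  exact (theta3_sq_eq hq20 hq21).symm

/-- Key identity 2: `θ₃(q) θ₄(q) = θ₄(q²)²`. -/
private lemma theta_mul_identity (h0 : 0 < q) (h1 : q < 1) :
    theta3Real q * theta4Real q = theta4Real (q ^ 2) ^ 2 := by
  have hqne : q ≠ 0 := h0.ne'
  have hne : (-1 : ℝ) ≠ 0 := by norm_num
  have hq20 : (0 : ℝ) < q ^ 2 := by positivity
  have hq21 : q ^ 2 < 1 := by nlinarith
  have hF : Summable fun p : ℤ × ℤ => q ^ (p.1 ^ 2) * ((-1 : ℝ) ^ p.2 * q ^ (p.2 ^ 2)) :=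
    summable_mul_of_summable_norm (f := fun n : ℤ => q ^ (n ^ 2))
      (g := fun n : ℤ => (-1 : ℝ) ^ n * q ^ (n ^ 2))
      (norm_summable_theta_int h0 h1) (norm_summable_theta4_int h0 h1)
  have hG : Summable fun p : ℤ × ℤ => ((-1 : ℝ) ^ p.1 * q ^ (p.1 ^ 2)) * q ^ (p.2 ^ 2) :=
    summable_mul_of_summable_norm (f := fun n : ℤ => (-1 : ℝ) ^ n * q ^ (n ^ 2))
      (g := fun n : ℤ => q ^ (n ^ 2))
      (norm_summable_theta4_int h0 h1) (norm_summable_theta_int h0 h1)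
  have key : 2 * (theta3Real q * theta4Real q)
      = 2 * theta4Real (q ^ 2) ^ 2 := by
    have e1 : theta3Real q * theta4Real q
        = ∑' p : ℤ × ℤ, q ^ (p.1 ^ 2) * ((-1 : ℝ) ^ p.2 * q ^ (p.2 ^ 2)) := by
      rw [theta3Real, theta4Real]
      exact tsum_mul_tsum_of_summable_norm (f := fun n : ℤ => q ^ (n ^ 2))
        (g := fun n : ℤ => (-1 : ℝ) ^ n * q ^ (n ^ 2))
        (norm_summable_theta_int h0 h1) (norm_summable_theta4_int h0 h1)
    have e2 : theta4Real q * theta3Real q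
        = ∑' p : ℤ × ℤ, ((-1 : ℝ) ^ p.1 * q ^ (p.1 ^ 2)) * q ^ (p.2 ^ 2) := by
      rw [theta3Real, theta4Real]
      exact tsum_mul_tsum_of_summable_norm (f := fun n : ℤ => (-1 : ℝ) ^ n * q ^ (n ^ 2))
        (g := fun n : ℤ => q ^ (n ^ 2))
        (norm_summable_theta4_int h0 h1) (norm_summable_theta_int h0 h1)
    have sum2 : 2 * (theta3Real q * theta4Real q)
        = ∑' p : ℤ × ℤ, (((-1 : ℝ) ^ p.1 + (-1 : ℝ) ^ p.2)
            * (q ^ (p.1 ^ 2) * q ^ (p.2 ^ 2))) := by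
      have h2 : 2 * (theta3Real q * theta4Real q)
          = theta3Real q * theta4Real q + theta4Real q * theta3Real q := by ring
      have e3 : (∑' p : ℤ × ℤ, q ^ (p.1 ^ 2) * ((-1 : ℝ) ^ p.2 * q ^ (p.2 ^ 2)))
          + ∑' p : ℤ × ℤ, ((-1 : ℝ) ^ p.1 * q ^ (p.1 ^ 2)) * q ^ (p.2 ^ 2)
          = ∑' p : ℤ × ℤ, (q ^ (p.1 ^ 2) * ((-1 : ℝ) ^ p.2 * q ^ (p.2 ^ 2))
              + ((-1 : ℝ) ^ p.1 * q ^ (p.1 ^ 2)) * q ^ (p.2 ^ 2)) := (Summable.tsum_add hF hG).symm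
      rw [h2, e1, e2, e3]
      exact tsum_congr fun p => by ring
    rw [sum2]
    have hsupp : Function.support
        (fun p : ℤ × ℤ => ((-1 : ℝ) ^ p.1 + (-1 : ℝ) ^ p.2)
          * (q ^ (p.1 ^ 2) * q ^ (p.2 ^ 2)))
        ⊆ Set.range (fun p : ℤ × ℤ => (p.1 + p.2, p.1 - p.2)) := by
      intro p hp
      rcases Int.even_or_odd (p.1 + p.2) with h | h
      · obtain ⟨u, hu⟩ := h
        exact ⟨(u, p.1 - u), by rw [Prod.ext_iff]; constructor <;> simp <;> omega⟩
      · exfalso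
        apply hp
        beta_reduce
        rcases Int.even_or_odd p.1 with h1' | h1'
        · have h2' : Odd p.2 := by
            rcases Int.even_or_odd p.2 with h2' | h2'
            · exact absurd (h1'.add h2') (Int.not_even_iff_odd.mpr h)
            · exact h2'
          rw [h1'.neg_one_zpow, h2'.neg_one_zpow]; ring
        · have h2' : Even p.2 := by
            rcases Int.even_or_odd p.2 with h2' | h2'
            · exact h2'
            · exact absurd (h1'.add_odd h2') (Int.not_even_iff_odd.mpr h)
          rw [h1'.neg_one_zpow, h2'.neg_one_zpow]; ring
    rw [← phi_injective.tsum_eq hsupp]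
    have hval : ∀ p : ℤ × ℤ,
        ((-1 : ℝ) ^ (p.1 + p.2) + (-1 : ℝ) ^ (p.1 - p.2))
          * (q ^ ((p.1 + p.2) ^ 2) * q ^ ((p.1 - p.2) ^ 2))
        = 2 * (((-1 : ℝ) ^ p.1 * (q ^ 2) ^ (p.1 ^ 2))
            * ((-1 : ℝ) ^ p.2 * (q ^ 2) ^ (p.2 ^ 2))) := by
      intro p
      rw [neg_one_zpow_sub, qsplit hqne, zpow_add₀ hne]
      ring
    rw [tsum_congr hval, tsum_mul_left]
    congr 1
    exact (theta4_sq_eq hq20 hq21).symm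
  exact mul_left_cancel₀ (two_ne_zero (α := ℝ)) key

private lemma theta3_ge_one (h0 : 0 < q) (h1 : q < 1) : 1 ≤ theta3Real q := by
  have hs := summable_theta_int h0 h1
  have := Summable.le_tsum hs 0 (fun j _ => (zpow_pos h0 _).le)
  simpa [theta3Real] using this

private lemma theta3_pos (h0 : 0 < q) (h1 : q < 1) : 0 < theta3Real q :=
  lt_of_lt_of_le one_pos (theta3_ge_one h0 h1)

private lemma tsum_pow_succ_le (h0 : 0 < q) (h1 : q < 1) :
    ∑' n : ℕ, q ^ ((n + 1) ^ 2) ≤ q / (1 - q) := by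
  have hgeom : Summable fun n : ℕ => q ^ (n + 1) := by
    have := (summable_geometric_of_lt_one h0.le h1).mul_right q
    exact this.congr fun n => (pow_succ q n).symm
  have hle : ∑' n : ℕ, q ^ ((n + 1) ^ 2) ≤ ∑' n : ℕ, q ^ (n + 1) := by
    refine Summable.tsum_le_tsum (fun n => ?_) (summable_theta_nat' h0.le h1) hgeom
    exact pow_le_pow_of_le_one h0.le h1.le (Nat.le_self_pow two_ne_zero _)
  have hval : ∑' n : ℕ, q ^ (n + 1) = (1 - q)⁻¹ * q := by
    rw [tsum_congr fun n => pow_succ q n, tsum_mul_right, tsum_geometric_of_lt_one h0.le h1]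
  rw [div_eq_inv_mul]
  exact hle.trans (le_of_eq hval)

private lemma theta3_sub_one_bound (h0 : 0 < q) (h1 : q < 1) :
    |theta3Real q - 1| ≤ 2 * (q / (1 - q)) := by
  have hs1 : Summable fun n : ℕ => q ^ ((n : ℤ) ^ 2) :=
    (summable_theta_nat h0.le h1).congr fun n => (q_zpow_nat n).symm
  have hs2 : Summable fun n : ℕ => q ^ ((-((n : ℤ) + 1)) ^ 2) :=
    (summable_theta_nat' h0.le h1).congr fun n => (q_zpow_neg_nat n).symm
  have hsplit : theta3Real q
      = (∑' n : ℕ, q ^ ((n : ℤ) ^ 2)) + ∑' n : ℕ, q ^ ((-((n : ℤ) + 1)) ^ 2) :=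
    tsum_of_nat_of_neg_add_one hs1 hs2
  have hpos : (∑' n : ℕ, q ^ ((n : ℤ) ^ 2)) = 1 + ∑' n : ℕ, q ^ ((n + 1) ^ 2) := by
    rw [Summable.tsum_eq_zero_add hs1]
    have h00 : q ^ (((0 : ℕ) : ℤ) ^ 2) = 1 := by norm_num
    rw [h00]
    congr 1
  have hneg : (∑' n : ℕ, q ^ ((-((n : ℤ) + 1)) ^ 2) : ℝ) = ∑' n : ℕ, q ^ ((n + 1) ^ 2) :=
    tsum_congr fun n => q_zpow_neg_nat n
  have hS0 : 0 ≤ ∑' n : ℕ, q ^ ((n + 1) ^ 2) := tsum_nonneg fun n => by positivity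
  have hS := tsum_pow_succ_le h0 h1
  rw [hsplit, hpos, hneg, abs_le]
  constructor <;> nlinarith

private lemma theta4_sub_one_bound (h0 : 0 < q) (h1 : q < 1) :
    |theta4Real q - 1| ≤ 2 * (q / (1 - q)) := by
  have hs1 : Summable fun n : ℕ => (-1 : ℝ) ^ (n : ℤ) * q ^ ((n : ℤ) ^ 2) := by
    refine Summable.of_norm (((summable_theta_nat h0.le h1).congr fun n => ?_))
    rw [norm_mul, norm_zpow, norm_neg, norm_one, one_zpow, one_mul,
      Real.norm_of_nonneg (zpow_pos h0 _).le, q_zpow_nat]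
  have hs2 : Summable fun n : ℕ =>
      (-1 : ℝ) ^ (-((n : ℤ) + 1)) * q ^ ((-((n : ℤ) + 1)) ^ 2) := by
    refine Summable.of_norm (((summable_theta_nat' h0.le h1).congr fun n => ?_))
    rw [norm_mul, norm_zpow, norm_neg, norm_one, one_zpow, one_mul,
      Real.norm_of_nonneg (zpow_pos h0 _).le, q_zpow_neg_nat]
  have hsplit : theta4Real q
      = (∑' n : ℕ, (-1 : ℝ) ^ (n : ℤ) * q ^ ((n : ℤ) ^ 2))
        + ∑' n : ℕ, (-1 : ℝ) ^ (-((n : ℤ) + 1)) * q ^ ((-((n : ℤ) + 1)) ^ 2) :=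
    tsum_of_nat_of_neg_add_one hs1 hs2
  set T : ℝ := ∑' n : ℕ, (-1 : ℝ) ^ (n + 1) * q ^ ((n + 1) ^ 2) with hT
  have hsTn : Summable fun n : ℕ => ‖(-1 : ℝ) ^ (n + 1) * q ^ ((n + 1) ^ 2)‖ := by
    refine ((summable_theta_nat' h0.le h1).congr fun n => ?_)
    rw [norm_mul, norm_pow, norm_neg, norm_one, one_pow, one_mul,
      Real.norm_of_nonneg (pow_nonneg h0.le _)]
  have hcast : ∀ n : ℕ, ((-1 : ℝ)) ^ ((n : ℤ) + 1) = (-1 : ℝ) ^ (n + 1) := fun n => by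
    rw [show ((n : ℤ) + 1) = ((n + 1 : ℕ) : ℤ) by push_cast; ring, zpow_natCast]
  have hpos : (∑' n : ℕ, (-1 : ℝ) ^ (n : ℤ) * q ^ ((n : ℤ) ^ 2)) = 1 + T := by
    rw [Summable.tsum_eq_zero_add hs1]
    have h00 : (-1 : ℝ) ^ (((0 : ℕ) : ℤ)) * q ^ (((0 : ℕ) : ℤ) ^ 2) = 1 := by norm_num
    rw [h00]
    congr 1
  have hneg : (∑' n : ℕ, (-1 : ℝ) ^ (-((n : ℤ) + 1)) * q ^ ((-((n : ℤ) + 1)) ^ 2)) = T := by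
    refine tsum_congr fun n => ?_
    rw [q_zpow_neg_nat, zpow_neg, neg_one_zpow_inv, hcast]
  have habsT : |T| ≤ q / (1 - q) := by
    have h1' : |T| ≤ ∑' n : ℕ, ‖(-1 : ℝ) ^ (n + 1) * q ^ ((n + 1) ^ 2)‖ := by
      simpa [hT] using norm_tsum_le_tsum_norm hsTn
    refine h1'.trans ?_
    have h2' : (∑' n : ℕ, ‖(-1 : ℝ) ^ (n + 1) * q ^ ((n + 1) ^ 2)‖)
        = ∑' n : ℕ, q ^ ((n + 1) ^ 2) := by
      refine tsum_congr fun n => ?_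
      rw [norm_mul, norm_pow, norm_neg, norm_one, one_pow, one_mul,
        Real.norm_of_nonneg (pow_nonneg h0.le _)]
    rw [h2']
    exact tsum_pow_succ_le h0 h1
  rw [hsplit, hpos, hneg, abs_le]
  rw [abs_le] at habsT
  constructor <;> [linarith [habsT.1]; linarith [habsT.2]]

private lemma theta4_pos_of_small (h0 : 0 < q) (h3 : q < 1 / 3) : 0 < theta4Real q := by
  have h1 : q < 1 := by linarith
  have hb := theta4_sub_one_bound h0 h1
  rw [abs_le] at hb
  have : q / (1 - q) < 1 / 2 := by
    rw [div_lt_div_iff₀ (by linarith) (by norm_num)]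
    linarith
  linarith [hb.1]

private lemma theta4_pos_aux : ∀ m : ℕ, ∀ q : ℝ, 0 < q → q < 1 → q ^ (2 ^ m) < 1 / 3 →
    0 < theta4Real q := by
  intro m
  induction m with
  | zero =>
    intro q h0 h1 hsm
    simp only [pow_zero, pow_one] at hsm
    exact theta4_pos_of_small h0 hsm
  | succ m ih =>
    intro q h0 h1 hsm
    have hq20 : (0 : ℝ) < q ^ 2 := by positivity
    have hq21 : q ^ 2 < 1 := by nlinarith
    have hsm' : (q ^ 2) ^ (2 ^ m) < 1 / 3 := by
      rw [← pow_mul]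
      rwa [pow_succ'] at hsm
    have h4 := ih (q ^ 2) hq20 hq21 hsm'
    have hkey := theta_mul_identity h0 h1
    have hprod : 0 < theta3Real q * theta4Real q := by
      rw [hkey]; positivity
    nlinarith [theta3_pos h0 h1, hprod]

private lemma theta4_pos (h0 : 0 < q) (h1 : q < 1) : 0 < theta4Real q := by
  obtain ⟨m, hm⟩ := exists_pow_lt_of_lt_one (show (0:ℝ) < 1/3 by norm_num) h1
  have hle : q ^ (2 ^ m) ≤ q ^ m :=
    pow_le_pow_of_le_one h0.le h1.le (Nat.lt_two_pow_self (n := m)).le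
  exact theta4_pos_aux m q h0 h1 (lt_of_le_of_lt hle hm)

end Aux

theorem agm_theta3_sq_theta4_sq (q : ℝ) (hq0 : 0 < q) (hq1 : q < 1) :
    agm (theta3Real q ^ 2) (theta4Real q ^ 2) = 1 := by
  set r : ℕ → ℝ := fun n => q ^ (2 ^ n) with hr
  have hr0 : ∀ n, 0 < r n := fun n => by positivity
  have hr1 : ∀ n, r n < 1 := fun n =>
    pow_lt_one₀ hq0.le hq1 (pow_pos (by norm_num : (0:ℕ) < 2) n).ne'
  have hrsq : ∀ n, (r n) ^ 2 = r (n + 1) := by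
    intro n
    show (q ^ (2 ^ n)) ^ 2 = q ^ (2 ^ (n + 1))
    rw [← pow_mul, pow_succ]
  have hseq : ∀ n, agmSeq (theta3Real q ^ 2) (theta4Real q ^ 2) n
      = (theta3Real (r n) ^ 2, theta4Real (r n) ^ 2) := by
    intro n
    induction n with
    | zero =>
      show _ = (theta3Real (q ^ 2 ^ 0) ^ 2, theta4Real (q ^ 2 ^ 0) ^ 2)
      rw [pow_zero, pow_one]
      rfl
    | succ n ih =>
      rw [agmSeq, ih]
      have h0 := hr0 n
      have h1 := hr1 n
      have haux : (theta3Real (r n) ^ 2 + theta4Real (r n) ^ 2) / 2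
          = theta3Real (r (n + 1)) ^ 2 := by
        rw [theta_add_identity h0 h1, hrsq]
        ring
      have hgeo : Real.sqrt (theta3Real (r n) ^ 2 * theta4Real (r n) ^ 2)
          = theta4Real (r (n + 1)) ^ 2 := by
        rw [← mul_pow, Real.sqrt_sq_eq_abs,
          abs_of_nonneg (mul_nonneg (theta3_pos h0 h1).le (theta4_pos h0 h1).le),
          theta_mul_identity h0 h1, hrsq]
      rw [haux, hgeo]
  have hlim : Tendsto (fun n => (agmSeq (theta3Real q ^ 2) (theta4Real q ^ 2) n).1)
      atTop (𝓝 1) := by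
    have heq : (fun n => (agmSeq (theta3Real q ^ 2) (theta4Real q ^ 2) n).1)
        = fun n => theta3Real (r n) ^ 2 := by
      funext n
      rw [hseq n]
    rw [heq]
    have hrlim : Tendsto r atTop (𝓝 0) := by
      have hub : ∀ n, r n ≤ q ^ n := fun n =>
        pow_le_pow_of_le_one hq0.le hq1.le (Nat.lt_two_pow_self (n := n)).le
      refine squeeze_zero (fun n => (hr0 n).le) hub ?_
      exact tendsto_pow_atTop_nhds_zero_of_lt_one hq0.le hq1
    have hbound : Tendsto (fun n => 2 * (r n / (1 - r n))) atTop (𝓝 0) := by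
      have h : Tendsto (fun n => 2 * (r n / (1 - r n))) atTop
          (𝓝 (2 * ((0 : ℝ) / (1 - 0)))) := by
        apply Tendsto.const_mul
        exact hrlim.div (tendsto_const_nhds.sub hrlim) (by norm_num)
      simpa using h
    have h3lim : Tendsto (fun n => theta3Real (r n)) atTop (𝓝 1) := by
      have h : Tendsto (fun n => theta3Real (r n) - 1) atTop (𝓝 0) := by
        refine squeeze_zero_norm (fun n => ?_) hbound
        exact theta3_sub_one_bound (hr0 n) (hr1 n)
      have h' := h.add_const 1
      simpa using h'
    have h := h3lim.pow 2
    simpa using h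
  rw [agm]
  exact hlim.limUnder_eq
end
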